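/- Let p be a prime, σ and ι types, g : ι → MvPolynomial σ ℤ a family of multivariable polynomials with integer coefficients, and S a nonempty finite multiset over ι. Then every coefficient of the polynomial θ(p • S) · ∏_{a ∈ S} (g a)^p − (θ(S)/p) · ∏_{a ∈ S} (expand p (g a)) ∈ MvPolynomial σ ℚ is p-integral, where expand p substitutes x_i^p for each variable x_i, and the products are taken with multiplicity over S. -/

import Mathlib

open MvPolynomial

/-- `|Aut S| = ∏_a (mult_S a)!` for a finite multiset `S`. -/
noncomputable def lmovAut {α : Type*} [DecidableEq α] (S : Multiset α) : ℚ :=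
  ∏ a ∈ S.toFinset, (Nat.factorial (S.count a) : ℚ)

/-- `θ(S) = (−1)^{ℓ(S)−1} (ℓ(S)−1)! / |Aut S|`. -/
noncomputable def lmovTheta {α : Type*} [DecidableEq α] (S : Multiset α) : ℚ :=
  (-1) ^ (Multiset.card S - 1) * (Nat.factorial (Multiset.card S - 1) : ℚ) / lmovAut S

section LmovAux

open Finset

lemma lmov_prod_X_pow {R σ : Type*} [CommSemiring R] (s : Finset σ) (k : σ → ℕ) :
    (∏ a ∈ s, (X a : MvPolynomial σ R) ^ k a)
      = monomial (∑ a ∈ s, Finsupp.single a (k a)) 1 := by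
  induction s using Finset.cons_induction with
  | empty => simp [monomial_zero']
  | cons a s ha ih =>
      rw [Finset.prod_cons, ih, Finset.sum_cons, X_pow_eq_monomial, monomial_mul, one_mul]

lemma lmov_single_sum_apply {ι : Type*} [DecidableEq ι] (s : Finset ι) (k : ι → ℕ) (b : ι) :
    (∑ a ∈ s, Finsupp.single a (k a)) b = if b ∈ s then k b else 0 := by
  rw [Finsupp.finset_sum_apply]
  simp_rw [Finsupp.single_apply]
  exact Finset.sum_ite_eq' s b k

/-- Extraction of a single coefficient from a multinomial power. -/
lemma lmov_coeff_pow {R ι : Type*} [CommRing R] [DecidableEq ι]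
    (s : Finset ι) (y : ι → R) (e N : ℕ) (he : e ≠ 0) (k₀ : ι → ℕ)
    (hk₀sum : ∑ a ∈ s, k₀ a = N) (hk₀supp : ∀ i, k₀ i ≠ 0 → i ∈ s) :
    coeff (∑ a ∈ s, Finsupp.single a (e * k₀ a))
        ((∑ a ∈ s, C (y a) * X a ^ e : MvPolynomial ι R) ^ N)
      = (Nat.multinomial s k₀ : R) * ∏ a ∈ s, (y a) ^ k₀ a := by
  have hterm : ∀ k : ι → ℕ,
      ∏ a ∈ s, (C (y a) * X a ^ e : MvPolynomial ι R) ^ k a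
        = monomial (∑ a ∈ s, Finsupp.single a (e * k a)) (∏ a ∈ s, y a ^ k a) := by
    intro k
    simp_rw [mul_pow, ← C_pow, ← pow_mul, Finset.prod_mul_distrib, ← map_prod,
      lmov_prod_X_pow, C_mul_monomial, mul_one]
  have hinj : ∀ k : ι → ℕ, (∀ i, k i ≠ 0 → i ∈ s) →
      (∑ a ∈ s, Finsupp.single a (e * k a)) = (∑ a ∈ s, Finsupp.single a (e * k₀ a)) →
      k = k₀ := by
    intro k hk hEq
    funext b
    by_cases hb : b ∈ s
    · have := DFunLike.congr_fun hEq b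
      rw [lmov_single_sum_apply, lmov_single_sum_apply, if_pos hb, if_pos hb] at this
      exact Nat.eq_of_mul_eq_mul_left (Nat.pos_of_ne_zero he) this
    · have h1 : k b = 0 := by by_contra h; exact hb (hk b h)
      have h2 : k₀ b = 0 := by by_contra h; exact hb (hk₀supp b h)
      rw [h1, h2]
  rw [Finset.sum_pow_eq_sum_piAntidiag, coeff_sum]
  have hk₀mem : k₀ ∈ s.piAntidiag N := by
    rw [Finset.mem_piAntidiag]; exact ⟨hk₀sum, hk₀supp⟩
  rw [Finset.sum_eq_single_of_mem k₀ hk₀mem]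
  · rw [hterm]
    have : ((Nat.multinomial s k₀ : MvPolynomial ι R)) = C ((Nat.multinomial s k₀ : R)) := by
      simp
    rw [this, C_mul_monomial, coeff_monomial, if_pos rfl]
  · intro k hk hne
    rw [hterm]
    have hksupp : ∀ i, k i ≠ 0 → i ∈ s := (Finset.mem_piAntidiag.mp hk).2
    have : ((Nat.multinomial s k : MvPolynomial ι R)) = C ((Nat.multinomial s k : R)) := by simp
    rw [this, C_mul_monomial, coeff_monomial, if_neg]
    intro hEq
    exact hne (hinj k hksupp hEq)

lemma lmov_expand_char {σ : Type*} (p : ℕ) (hp : p.Prime) (f : MvPolynomial σ (ZMod p)) :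
    expand p f = f ^ p := by
  haveI : Fact p.Prime := ⟨hp⟩
  haveI : ExpChar (MvPolynomial σ (ZMod p)) p := .prime hp
  induction f using MvPolynomial.induction_on with
  | C a => rw [expand_C, ← C_pow, ZMod.pow_card]
  | add f g hf hg => rw [map_add, hf, hg, add_pow_char]
  | mul_X f i hf => rw [map_mul, expand_X, hf, mul_pow]

/-- mod-`p` Frobenius congruence in `MvPolynomial ι (MvPolynomial σ ℤ)`. -/
lemma lmov_modp {σ ι : Type*} [DecidableEq ι] (p : ℕ) (hp : p.Prime)
    (g : ι → MvPolynomial σ ℤ) (s : Finset ι) :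
    (p : MvPolynomial ι (MvPolynomial σ ℤ)) ∣
      (∑ a ∈ s, C (g a) * X a) ^ p - (∑ a ∈ s, C (expand p (g a)) * X a ^ p) := by
  haveI : Fact p.Prime := ⟨hp⟩
  haveI : ExpChar (MvPolynomial ι (MvPolynomial σ (ZMod p))) p := .prime hp
  set F : MvPolynomial ι (MvPolynomial σ ℤ) →+* MvPolynomial ι (MvPolynomial σ (ZMod p)) :=
    MvPolynomial.map (MvPolynomial.map (Int.castRingHom (ZMod p))) with hF
  set Diff : MvPolynomial ι (MvPolynomial σ ℤ) :=
    (∑ a ∈ s, C (g a) * X a) ^ p - (∑ a ∈ s, C (expand p (g a)) * X a ^ p) with hDiff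
  have hzero : F Diff = 0 := by
    rw [hDiff, map_sub, map_pow, map_sum, map_sum, sub_eq_zero]
    simp_rw [hF, map_mul, map_pow, MvPolynomial.map_C, MvPolynomial.map_X]
    rw [sum_pow_char]
    congr 1
    funext a
    rw [mul_pow, ← C_pow, map_expand, lmov_expand_char p hp]
  have h1 : ∀ (D : ι →₀ ℕ) (d : σ →₀ ℕ), (p : ℤ) ∣ coeff d (coeff D Diff) := by
    intro D d
    have h2 : coeff d (coeff D (F Diff)) = 0 := by rw [hzero]; simp
    rw [hF, coeff_map, coeff_map] at h2
    rw [← ZMod.intCast_zmod_eq_zero_iff_dvd]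
    exact h2
  have h3 : C ((p : MvPolynomial σ ℤ)) ∣ Diff := by
    rw [C_dvd_iff_dvd_coeff]
    intro D
    have h4 : C ((p : ℤ)) ∣ coeff D Diff := by
      rw [C_dvd_iff_dvd_coeff]
      intro d; exact h1 D d
    have hc : ((p : MvPolynomial σ ℤ)) = C ((p : ℤ)) := by simp
    rw [hc]
    exact h4
  have hc2 : ((p : MvPolynomial ι (MvPolynomial σ ℤ))) = C ((p : MvPolynomial σ ℤ)) := by simp
  rw [hc2]
  exact h3

/-- The full `p^{v_p(n)+1}` congruence. -/
lemma lmov_key_dvd {σ ι : Type*} [DecidableEq ι] (p : ℕ) (hp : p.Prime)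
    (g : ι → MvPolynomial σ ℤ) (s : Finset ι) (n : ℕ) :
    ((p : MvPolynomial ι (MvPolynomial σ ℤ)) ^ (padicValNat p n + 1)) ∣
      (∑ a ∈ s, C (g a) * X a) ^ (p * n) - (∑ a ∈ s, C (expand p (g a)) * X a ^ p) ^ n := by
  set q := padicValNat p n
  obtain ⟨n', hn'⟩ : p ^ q ∣ n := pow_padicValNat_dvd
  set u : MvPolynomial ι (MvPolynomial σ ℤ) := ∑ a ∈ s, C (g a) * X a
  set v : MvPolynomial ι (MvPolynomial σ ℤ) := ∑ a ∈ s, C (expand p (g a)) * X a ^ p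
  have h1 : ((p : MvPolynomial ι (MvPolynomial σ ℤ)) ^ (q + 1)) ∣
      (u ^ p) ^ p ^ q - v ^ p ^ q := by
    have := dvd_sub_pow_of_dvd_sub (lmov_modp p hp g s) q
    simpa using this
  have h2 : (u ^ p) ^ p ^ q - v ^ p ^ q ∣ ((u ^ p) ^ p ^ q) ^ n' - (v ^ p ^ q) ^ n' :=
    sub_dvd_pow_sub_pow _ _ n'
  have h3 : u ^ (p * n) = ((u ^ p) ^ p ^ q) ^ n' := by
    rw [← pow_mul, ← pow_mul, hn']
  have h4 : v ^ n = (v ^ p ^ q) ^ n' := by rw [← pow_mul, hn']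
  rw [h3, h4]
  exact dvd_trans h1 h2

lemma lmov_int_coeff_dvd {σ ι : Type*} (p N : ℕ)
    (x : MvPolynomial ι (MvPolynomial σ ℤ))
    (h : ((p : MvPolynomial ι (MvPolynomial σ ℤ)) ^ N) ∣ x)
    (D : ι →₀ ℕ) (d : σ →₀ ℕ) :
    (p : ℤ) ^ N ∣ coeff d (coeff D x) := by
  have h1 : (C ((p : MvPolynomial σ ℤ) ^ N)) ∣ x := by
    simpa [map_pow] using h
  have h2 := (C_dvd_iff_dvd_coeff _ _).mp h1 D
  have h3 : (C ((p : ℤ) ^ N)) ∣ coeff D x := by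
    simpa [map_pow] using h2
  exact (C_dvd_iff_dvd_coeff _ _).mp h3 d

lemma lmov_theta_eq {α : Type*} [DecidableEq α] (S : Multiset α) (hS : S ≠ 0) :
    lmovTheta S = (-1) ^ (Multiset.card S - 1) *
      (Nat.multinomial S.toFinset (fun a => S.count a) : ℚ) / (Multiset.card S) := by
  have hn0 : 0 < Multiset.card S := Multiset.card_pos.mpr hS
  have hspec : (∏ a ∈ S.toFinset, (S.count a).factorial) *
      Nat.multinomial S.toFinset (fun a => S.count a) = (Multiset.card S).factorial := by
    have := Nat.multinomial_spec S.toFinset (fun a => S.count a)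
    rwa [Multiset.toFinset_sum_count_eq] at this
  have hfact : Multiset.card S * (Multiset.card S - 1).factorial
      = (Multiset.card S).factorial := Nat.mul_factorial_pred hn0.ne'
  have hAut : lmovAut S ≠ 0 := by
    unfold lmovAut
    exact Finset.prod_ne_zero_iff.mpr fun a _ => Nat.cast_ne_zero.mpr (Nat.factorial_ne_zero _)
  have hcn : ((Multiset.card S : ℚ)) ≠ 0 := Nat.cast_ne_zero.mpr hn0.ne'
  unfold lmovTheta
  rw [div_eq_div_iff hAut hcn]
  have hq : (lmovAut S) * (Nat.multinomial S.toFinset (fun a => S.count a) : ℚ)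
      = (Multiset.card S).factorial := by
    unfold lmovAut
    rw [← Nat.cast_prod]
    exact_mod_cast congrArg (Nat.cast : ℕ → ℚ) hspec
  calc (-1:ℚ) ^ (Multiset.card S - 1) * (Nat.factorial (Multiset.card S - 1) : ℚ)
        * (Multiset.card S)
      = (-1:ℚ) ^ (Multiset.card S - 1) *
        ((Multiset.card S) * (Multiset.card S - 1).factorial : ℕ) := by push_cast; ring
    _ = (-1:ℚ) ^ (Multiset.card S - 1) * ((Multiset.card S).factorial : ℕ) := by rw [hfact]
    _ = (-1) ^ (Multiset.card S - 1) *
        (Nat.multinomial S.toFinset (fun a => S.count a) : ℚ) * lmovAut S := by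
      rw [mul_assoc, mul_comm (Nat.multinomial _ _ : ℚ) (lmovAut S), hq]

end LmovAux

/-- Every coefficient of
`θ(p•S) ⬝ ∏_{a ∈ S} (g a)^p − (θ(S)/p) ⬝ ∏_{a ∈ S} expand p (g a)`
is `p`-integral (the products are taken with multiplicity over `S`, and the
integer polynomials `g a` are viewed in `MvPolynomial σ ℚ`). -/
theorem stmt_2 {σ ι : Type*} [DecidableEq ι] (p : ℕ) (hp : p.Prime)
    (g : ι → MvPolynomial σ ℤ) (S : Multiset ι) (hS : S ≠ 0) :
    ∀ m : σ →₀ ℕ,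
      0 ≤ padicValRat p
        (MvPolynomial.coeff m
          (C (lmovTheta (p • S)) *
              (S.map fun a => (MvPolynomial.map (Int.castRingHom ℚ) (g a)) ^ p).prod
            - C (lmovTheta S / p) *
              (S.map fun a =>
                MvPolynomial.expand p (MvPolynomial.map (Int.castRingHom ℚ) (g a))).prod)) := by
  intro m
  haveI : Fact p.Prime := ⟨hp⟩
  classical
  set s := S.toFinset with hs
  set n := Multiset.card S with hn
  have hn0 : 0 < n := Multiset.card_pos.mpr hS
  have hp0 : p ≠ 0 := hp.ne_zero
  have hp1 : 1 < p := hp.one_lt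
  set q := padicValNat p n with hq
  set M₂ := Nat.multinomial s (fun a => p * S.count a) with hM2
  set M₁ := Nat.multinomial s (fun a => S.count a) with hM1
  set c₁ : ℤ := coeff m (∏ a ∈ s, (g a) ^ (p * S.count a)) with hc₁
  set c₂ : ℤ := coeff m (∏ a ∈ s, (expand p (g a)) ^ (S.count a)) with hc₂
  have hsum : ∑ a ∈ s, S.count a = n := Multiset.toFinset_sum_count_eq S
  -- the key integer divisibility
  have key : (p : ℤ) ^ (q + 1) ∣ (M₂ : ℤ) * c₁ - (M₁ : ℤ) * c₂ := by
    have hdvd := lmov_key_dvd p hp g s n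
    set D : ι →₀ ℕ := ∑ a ∈ s, Finsupp.single a (p * S.count a) with hD
    have hint := lmov_int_coeff_dvd p (q + 1) _ hdvd D m
    have hu : coeff D ((∑ a ∈ s, C (g a) * X a) ^ (p * n))
        = (M₂ : MvPolynomial σ ℤ) * ∏ a ∈ s, (g a) ^ (p * S.count a) := by
      have h := lmov_coeff_pow s g 1 (p * n) one_ne_zero (fun a => p * S.count a)
        (by rw [← Finset.mul_sum, hsum]) (fun i hi => by
          simp only [hs, Multiset.mem_toFinset]
          exact Multiset.count_pos.mp (Nat.pos_of_ne_zero fun h0 => hi (by rw [h0, mul_zero])))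
      simp only [one_mul, pow_one] at h
      exact h
    have hv : coeff D ((∑ a ∈ s, C (expand p (g a)) * X a ^ p) ^ n)
        = (M₁ : MvPolynomial σ ℤ) * ∏ a ∈ s, (expand p (g a)) ^ (S.count a) := by
      have h := lmov_coeff_pow s (fun a => expand p (g a)) p n hp0 (fun a => S.count a)
        hsum (fun i hi => by
          simp only [hs, Multiset.mem_toFinset]
          exact Multiset.count_pos.mp (Nat.pos_of_ne_zero hi))
      exact h
    rw [coeff_sub, hu, hv] at hint
    have hcast : ∀ (M : ℕ) (P : MvPolynomial σ ℤ),
        coeff m ((M : MvPolynomial σ ℤ) * P) = (M : ℤ) * coeff m P := by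
      intro M P
      have : ((M : MvPolynomial σ ℤ)) = C ((M : ℤ)) := by simp
      rw [this, coeff_C_mul]
    rw [coeff_sub, hcast, hcast] at hint
    exact hint
  -- sign bookkeeping
  set z : ℤ := (-1) ^ (p * n - 1) * M₂ * c₁ - (-1) ^ (n - 1) * M₁ * c₂ with hz
  have hzdvd : (p : ℤ) ^ (q + 1) ∣ z := by
    rcases Nat.even_or_odd (p * n - 1) with hpar1 | hpar1 <;>
      rcases Nat.even_or_odd (n - 1) with hpar2 | hpar2
    · -- both even
      rw [hz, hpar1.neg_one_pow, hpar2.neg_one_pow]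
      simpa using key
    · -- p*n-1 even, n-1 odd : impossible
      exfalso
      have h2 : Even n := by
        rw [Nat.even_iff]
        have := Nat.odd_iff.mp hpar2
        omega
      have h3 : Even (p * n) := h2.mul_left p
      have h4 : Odd (p * n - 1) := by
        rw [Nat.odd_iff]
        have := Nat.even_iff.mp h3
        have hpos : 0 < p * n := Nat.mul_pos hp.pos hn0
        omega
      exact (Nat.not_odd_iff_even.mpr hpar1) h4
    · -- p*n-1 odd, n-1 even : forces p = 2, n odd
      have h2 : Odd n := by
        rw [Nat.odd_iff]
        have := Nat.even_iff.mp hpar2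
        omega
      have h3 : Even (p * n) := by
        rw [Nat.even_iff]
        have := Nat.odd_iff.mp hpar1
        have hpos : 0 < p * n := Nat.mul_pos hp.pos hn0
        omega
      have hpe : Even p := by
        rcases Nat.even_mul.mp h3 with h | h
        · exact h
        · exact absurd h (Nat.not_even_iff_odd.mpr h2)
      have hp2 : p = 2 := hp.even_iff.mp hpe
      have hq0 : q = 0 := by
        rw [hq]
        refine padicValNat.eq_zero_of_not_dvd ?_
        rw [hp2]
        exact fun hc => (Nat.not_odd_iff_even.mpr (even_iff_two_dvd.mpr hc)) h2
      have key' : (p : ℤ) ∣ (M₂ : ℤ) * c₁ - (M₁ : ℤ) * c₂ := by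
        have := key
        rwa [hq0, pow_one] at this
      rw [hq0, pow_one, hz, hpar1.neg_one_pow, hpar2.neg_one_pow]
      obtain ⟨k, hk⟩ := key'
      subst hp2
      exact ⟨-k - (M₁ : ℤ) * c₂, by push_cast at hk ⊢; linear_combination -hk⟩
    · -- both odd
      rw [hz, hpar1.neg_one_pow, hpar2.neg_one_pow]
      have : (-1 : ℤ) * (M₂ : ℤ) * c₁ - (-1) * (M₁ : ℤ) * c₂
          = -((M₂ : ℤ) * c₁ - (M₁ : ℤ) * c₂) := by ring
      rw [this]
      exact dvd_neg.mpr key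
  -- rewrite the target coefficient
  have hP1 : (S.map fun a => (MvPolynomial.map (Int.castRingHom ℚ) (g a)) ^ p).prod
      = MvPolynomial.map (Int.castRingHom ℚ) (∏ a ∈ s, (g a) ^ (p * S.count a)) := by
    rw [Finset.prod_multiset_map_count, map_prod]
    refine Finset.prod_congr rfl fun a _ => ?_
    rw [map_pow, pow_mul]
  have hP2 : (S.map fun a =>
        MvPolynomial.expand p (MvPolynomial.map (Int.castRingHom ℚ) (g a))).prod
      = MvPolynomial.map (Int.castRingHom ℚ) (∏ a ∈ s, (expand p (g a)) ^ (S.count a)) := by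
    rw [Finset.prod_multiset_map_count, map_prod]
    refine Finset.prod_congr rfl fun a _ => ?_
    rw [map_pow, map_expand]
  have hcard2 : Multiset.card (p • S) = p * n := by rw [Multiset.card_nsmul, hn]
  have hS2 : (p • S) ≠ 0 := by
    intro h
    have h1 : p * n = 0 := by rw [← hcard2, h, Multiset.card_zero]
    exact Nat.mul_ne_zero hp0 hn0.ne' h1
  have htheta2 : lmovTheta (p • S) = (-1) ^ (p * n - 1) * (M₂ : ℚ) / (p * n) := by
    rw [lmov_theta_eq (p • S) hS2, hcard2]
    have ht : (p • S).toFinset = s := by rw [Multiset.toFinset_nsmul S p hp0, hs]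
    have hmc : Nat.multinomial (p • S).toFinset (fun a => (p • S).count a) = M₂ := by
      rw [ht, hM2]
      exact Nat.multinomial_congr fun a _ => by rw [Multiset.count_nsmul]
    rw [hmc]
    push_cast
    ring
  have htheta1 : lmovTheta S = (-1) ^ (n - 1) * (M₁ : ℚ) / n := by
    rw [lmov_theta_eq S hS, ← hn, ← hs, ← hM1]
  have hcoeff : coeff m
      (C (lmovTheta (p • S)) *
          (S.map fun a => (MvPolynomial.map (Int.castRingHom ℚ) (g a)) ^ p).prod
        - C (lmovTheta S / p) *
          (S.map fun a =>
            MvPolynomial.expand p (MvPolynomial.map (Int.castRingHom ℚ) (g a))).prod)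
      = (z : ℚ) / ((p * n : ℕ) : ℚ) := by
    rw [coeff_sub, coeff_C_mul, coeff_C_mul, hP1, hP2, coeff_map, coeff_map,
      htheta1, htheta2]
    rw [hz]
    push_cast
    have hnQ : (n : ℚ) ≠ 0 := Nat.cast_ne_zero.mpr hn0.ne'
    have hpQ : (p : ℚ) ≠ 0 := Nat.cast_ne_zero.mpr hp0
    field_simp
    simp only [eq_intCast, ← hc₁, ← hc₂]
  rw [hcoeff]
  by_cases hz0 : z = 0
  · simp [hz0]
  · have h1 : ((z : ℚ)) ≠ 0 := Int.cast_ne_zero.mpr hz0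
    have hpn0 : (p * n) ≠ 0 := Nat.mul_ne_zero hp0 hn0.ne'
    have h2 : ((p * n : ℕ) : ℚ) ≠ 0 := Nat.cast_ne_zero.mpr hpn0
    rw [padicValRat.div h1 h2, padicValRat.of_int, padicValRat.of_nat]
    have hv1 : q + 1 ≤ padicValInt p z := by
      rcases (padicValInt_dvd_iff (q + 1) z).mp hzdvd with h | h
      · exact absurd h hz0
      · exact h
    have hv2 : padicValNat p (p * n) = 1 + q := by
      rw [padicValNat.mul hp0 hn0.ne', padicValNat.self hp1, hq]
    rw [hv2]
    push_cast
    omega
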